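/- Let f : {0,1}^n → {0,1}^n be a Boolean network and let I be a feedback vertex set of its interaction graph G. If the component f_v is monotone for every vertex v ∉ I, then for all fixed points x, y of f, x ≤ y if and only if x_I ≤ y_I. Consequently, the set of fixed points of f, ordered componentwise, is order-isomorphic to the set {x_I : x is a fixed point of f} ⊆ {0,1}^I. -/
import Mathlib


open Classical

section Defs

variable {V : Type*}

/-- `f_v` depends on input `u`. -/
def Depends (f : (V → Bool) → V → Bool) (u v : V) : Prop :=
  ∃ x y : V → Bool, (∀ w, w ≠ u → x w = y w) ∧ f x v ≠ f y v

/-- The arcs of a cycle given by the list of its vertices `v₀ … v_m`: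
`(v₀,v₁), …, (v_m, v₀)`. -/
def CycArcs (l : List V) : List (V × V) :=
  (l ++ l.take 1).zip ((l ++ l.take 1).tail)

/-- A (directed) cycle of the digraph `G`, given by its list of (distinct) vertices.
Loops (cycles of length one) are allowed. -/
def IsCycle (G : V → V → Prop) (l : List V) : Prop :=
  l ≠ [] ∧ l.Nodup ∧ ∀ a ∈ CycArcs l, G a.1 a.2

/-- The arcs of a path given by the list of its vertices. -/
def PathArcs (l : List V) : List (V × V) := l.zip l.tail

/-- A (directed) path of `G` with at least one arc, with distinct vertices except that
the first and last vertex may coincide. -/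
def IsPath (G : V → V → Prop) (l : List V) : Prop :=
  2 ≤ l.length ∧ l.dropLast.Nodup ∧ l.tail.Nodup ∧ ∀ a ∈ PathArcs l, G a.1 a.2

/-- A packing: a collection of pairwise vertex-disjoint cycles. -/
def IsPacking (G : V → V → Prop) (P : List (List V)) : Prop :=
  (∀ l ∈ P, IsCycle G l) ∧ P.Pairwise fun l₁ l₂ => ∀ v ∈ l₁, v ∉ l₂

/-- A feedback vertex set: a set of vertices meeting every cycle. -/
def IsFVS (G : V → V → Prop) (I : Finset V) : Prop :=
  ∀ l : List V, IsCycle G l → ∃ v ∈ l, v ∈ I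

/-- `τ(G)`: minimum size of a feedback vertex set. -/
noncomputable def tau [Fintype V] (G : V → V → Prop) : ℕ :=
  sInf {k | ∃ I : Finset V, IsFVS G I ∧ I.card = k}

/-- `ν(G)`: maximum number of pairwise vertex-disjoint cycles. -/
noncomputable def nu (G : V → V → Prop) : ℕ :=
  sSup {k | ∃ P : List (List V), IsPacking G P ∧ P.length = k}

/-- A source: a vertex of in-degree zero. -/
def IsSource (G : V → V → Prop) (v : V) : Prop := ∀ u, ¬ G u v

/-- A principal path w.r.t. a packing `P`: a path none of whose arcs and none of whose
internal vertices belong to a cycle of the packing. -/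
def IsPrincipal (G : V → V → Prop) (P : List (List V)) (l : List V) : Prop :=
  IsPath G l ∧ (∀ a ∈ PathArcs l, ∀ C ∈ P, a ∉ CycArcs C) ∧
    ∀ v ∈ l.tail.dropLast, ∀ C ∈ P, v ∉ C

/-- There is a principal path (w.r.t. packing `P`) from a vertex satisfying `A` to `v`. -/
def PrincipalFrom (G : V → V → Prop) (P : List (List V)) (A : V → Prop) (v : V) : Prop :=
  ∃ l : List V, IsPrincipal G P l ∧ (∃ u, l.head? = some u ∧ A u) ∧ l.getLast? = some v

/-- A special packing. -/
def IsSpecialPacking (G : V → V → Prop) (P : List (List V)) : Prop :=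
  IsPacking G P ∧
    ∀ Ci ∈ P, ∀ v ∈ Ci,
      (∃ Cj ∈ P, Cj ≠ Ci ∧ PrincipalFrom G P (fun u => u ∈ Cj) v) →
      (PrincipalFrom G P (fun u => u ∈ Ci) v ∨ PrincipalFrom G P (IsSource G) v)

/-- `ν*(G)`: maximum size of a special packing. -/
noncomputable def nuStar (G : V → V → Prop) : ℕ :=
  sSup {k | ∃ P : List (List V), IsSpecialPacking G P ∧ P.length = k}

/-- Two vertex-disjoint cycles are independent if there is no arc between them. -/
def Independent (G : V → V → Prop) (C₁ C₂ : List V) : Prop :=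
  (∀ v ∈ C₁, v ∉ C₂) ∧ ∀ u ∈ C₁, ∀ v ∈ C₂, ¬ G u v ∧ ¬ G v u

/-- The arc `uv` is positive. -/
def PosArc [DecidableEq V] (f : (V → Bool) → V → Bool) (u v : V) : Prop :=
  ∀ x : V → Bool, x u = false → f x v ≤ f (Function.update x u true) v

/-- The arc `uv` is negative. -/
def NegArc [DecidableEq V] (f : (V → Bool) → V → Bool) (u v : V) : Prop :=
  ∀ x : V → Bool, x u = false → f (Function.update x u true) v ≤ f x v

/-- The sign of the arc `uv` in the signed interaction graph of `f`. -/
noncomputable def arcSign [DecidableEq V] (f : (V → Bool) → V → Bool) (u v : V) : ℤ :=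
  if PosArc f u v then 1 else if NegArc f u v then -1 else 0

/-- The sign of a cycle: product of the signs of its arcs. -/
def CycleSign (σ : V → V → ℤ) (l : List V) : ℤ :=
  ((CycArcs l).map fun a => σ a.1 a.2).prod

/-- `ν⁺(G,σ)`: maximum number of pairwise vertex-disjoint non-negative cycles. -/
noncomputable def nuPlus (G : V → V → Prop) (σ : V → V → ℤ) : ℕ :=
  sSup {k | ∃ P : List (List V),
    IsPacking G P ∧ (∀ C ∈ P, 0 ≤ CycleSign σ C) ∧ P.length = k}

/-- A monotone feedback vertex set of `(G,σ)`. -/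
def IsMonFVS (G : V → V → Prop) (σ : V → V → ℤ) (J : Finset V) : Prop :=
  IsFVS G J ∧ ∀ u v, G u v → σ u v ≠ 1 → v ∈ J

/-- `τ_m(G,σ)`: minimum size of a monotone feedback vertex set. -/
noncomputable def tauM [Fintype V] (G : V → V → Prop) (σ : V → V → ℤ) : ℕ :=
  sInf {k | ∃ J : Finset V, IsMonFVS G σ J ∧ J.card = k}

/-- The `I`-switch of the arc-labelling `σ`. -/
noncomputable def switchSign (σ : V → V → ℤ) (I : Finset V) (u v : V) : ℤ :=
  if ((u ∈ I) ↔ (v ∈ I)) then σ u v else -σ u v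

/-- `τ*_m(G,σ)`: minimum of `τ_m` over all switches of `(G,σ)`. -/
noncomputable def tauMStar [Fintype V] (G : V → V → Prop) (σ : V → V → ℤ) : ℕ :=
  sInf {k | ∃ I : Finset V, tauM G (switchSign σ I) = k}

end Defs

section Patterns

variable {m : Type*}

/-- A `k`-pattern in `P ⊆ {0,1}^m`. -/
def IsPattern (P : Set (m → Bool)) (k : ℕ) (X Y : Fin k → m → Bool) : Prop :=
  Function.Injective X ∧ Function.Injective Y ∧
    (∀ p, X p ∈ P) ∧ (∀ p, Y p ∈ P) ∧ ∀ p q, X p ≤ Y q ↔ p ≠ q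

/-- `P` has a `k`-pattern. -/
def HasPattern (P : Set (m → Bool)) (k : ℕ) : Prop :=
  ∃ X Y, IsPattern P k X Y

/-- `P` has a special `k`-pattern: a `k`-pattern with `y^p = complement of x^p`. -/
def HasSpecialPattern (P : Set (m → Bool)) (k : ℕ) : Prop :=
  ∃ X Y, IsPattern P k X Y ∧ ∀ p, Y p = fun v => !(X p v)

end Patterns

section Aux
variable {V : Type*}

lemma mem_zip_tail {l : List V} {a : V × V} (h : a ∈ l.zip l.tail) :
    ∃ k, ∃ hk : k + 1 < l.length, a = (l[k], l[k+1]) := by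
  obtain ⟨k, hk, hget⟩ := List.mem_iff_getElem.mp h
  have hlen : (l.zip l.tail).length = l.length - 1 := by
    simp [List.length_zip, List.length_tail]
  have hk' : k + 1 < l.length := by rw [hlen] at hk; omega
  refine ⟨k, hk', ?_⟩
  rw [← hget, List.getElem_zip, List.getElem_tail]

lemma mem_cycArcs {l : List V} (hl : l ≠ []) {a : V × V} (ha : a ∈ CycArcs l) :
    (∃ k, ∃ hk : k + 1 < l.length, a = (l[k], l[k+1])) ∨
      a = (l[l.length - 1]'(by have := List.length_pos_iff.2 hl; omega),
           l[0]'(List.length_pos_iff.2 hl)) := by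
  have hpos : 0 < l.length := List.length_pos_iff.2 hl
  obtain ⟨k, hk, hget⟩ := mem_zip_tail ha
  have hlt : (l.take 1).length = 1 := by simp [List.length_take]; omega
  have hL : (l ++ l.take 1).length = l.length + 1 := by simp [List.length_append]; omega
  rw [hL] at hk
  by_cases hcase : k + 1 < l.length
  · left
    refine ⟨k, hcase, ?_⟩
    rw [hget]
    congr 1 <;> rw [List.getElem_append_left (by omega)]
  · right
    have hkeq : k + 1 = l.length := by omega
    rw [hget]
    have h1 : (l ++ l.take 1)[k]'(by omega) = l[l.length - 1]'(by omega) := by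
      rw [List.getElem_append_left (by omega)]; congr 1; omega
    have h2 : (l ++ l.take 1)[k+1]'(by omega) = l[0]'(by omega) := by
      rw [List.getElem_append_right (by omega)]
      have : (l.take 1)[k + 1 - l.length]'(by omega) = (l.take 1)[0]'(by omega) := by
        congr 1; omega
      rw [this, List.getElem_take]
    rw [h1, h2]

lemma exists_cycle {n : ℕ} {G : Fin n → Fin n → Prop} {D : Fin n → Prop}
    (v₀ : Fin n) (hv₀ : D v₀) (hstep : ∀ v, D v → ∃ u, D u ∧ G u v) :
    ∃ l, IsCycle G l ∧ ∀ v ∈ l, D v := by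
  choose g hg1 hg2 using hstep
  let w : ℕ → {v : Fin n // D v} :=
    fun k => Nat.rec ⟨v₀, hv₀⟩ (fun _ p => ⟨g p.1 p.2, hg1 p.1 p.2⟩) k
  have hgw : ∀ k, G (w (k+1)).1 (w k).1 := fun k => hg2 (w k).1 (w k).2
  obtain ⟨j₀, i, hi, hww, hmin⟩ :
      ∃ j₀ i, i < j₀ ∧ w i = w j₀ ∧ ∀ a b, a < b → b < j₀ → w a ≠ w b := by
    obtain ⟨i', j', hij, hwe⟩ := Finite.exists_ne_map_eq_of_infinite w
    have hS : {j | ∃ i, i < j ∧ w i = w j}.Nonempty := by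
      rcases lt_or_gt_of_ne hij with h | h
      · exact ⟨j', i', h, hwe⟩
      · exact ⟨i', j', h, hwe.symm⟩
    obtain ⟨i, hi, hww⟩ := Nat.sInf_mem hS
    refine ⟨sInf {j | ∃ i, i < j ∧ w i = w j}, i, hi, hww, ?_⟩
    intro a b hab hb h
    exact absurd (Nat.sInf_le (show b ∈ {j | ∃ i, i < j ∧ w i = w j} from ⟨a, hab, h⟩))
      (by omega)
  have hm1 : 1 ≤ j₀ - i := by omega
  refine ⟨List.ofFn (fun k : Fin (j₀ - i) => (w (j₀ - 1 - k.1)).1), ⟨?_, ?_, ?_⟩, ?_⟩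
  · intro h
    have := congrArg List.length h
    simp at this
    omega
  · rw [List.nodup_ofFn]
    intro k₁ k₂ he
    have hk₁ := k₁.2; have hk₂ := k₂.2
    by_contra hne
    have hne' : j₀ - 1 - k₁.1 ≠ j₀ - 1 - k₂.1 := by
      intro h; apply hne; ext; omega
    have hwe' : w (j₀ - 1 - k₁.1) = w (j₀ - 1 - k₂.1) := Subtype.ext he
    rcases lt_or_gt_of_ne hne' with h | h
    · exact hmin _ _ h (by omega) hwe'
    · exact hmin _ _ h (by omega) hwe'.symm
  · intro a ha
    have hnil : List.ofFn (fun k : Fin (j₀ - i) => (w (j₀ - 1 - k.1)).1) ≠ [] := by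
      intro h
      have := congrArg List.length h
      simp at this
      omega
    have hlen : (List.ofFn (fun k : Fin (j₀ - i) => (w (j₀ - 1 - k.1)).1)).length = j₀ - i := by
      simp
    rcases mem_cycArcs hnil ha with ⟨k, hk, hae⟩ | hae
    · rw [hae, List.getElem_ofFn, List.getElem_ofFn]
      rw [hlen] at hk
      simp only []
      have e1 : j₀ - 1 - k = (j₀ - 1 - (k+1)) + 1 := by omega
      rw [e1]
      exact hgw _
    · rw [hae, List.getElem_ofFn, List.getElem_ofFn]
      have h0 := hgw (j₀ - 1)
      rw [show (j₀ - 1) + 1 = j₀ from by omega, ← hww] at h0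
      simp only [hlen, Fin.val_mk, Nat.sub_zero]
      convert h0 using 3
      omega
  · intro v hv
    rw [List.mem_ofFn] at hv
    obtain ⟨k, hk⟩ := hv
    rw [← hk]
    exact (w _).2

lemma exists_depends {n : ℕ} (f : (Fin n → Bool) → Fin n → Bool) (v : Fin n) :
    ∀ (d : ℕ) (a b : Fin n → Bool),
      (Finset.univ.filter fun w => a w ≠ b w).card ≤ d →
      f a v ≠ f b v → ∃ u, a u ≠ b u ∧ Depends f u v := by
  intro d
  induction d with
  | zero =>
    intro a b hc hne
    exfalso; apply hne
    have : a = b := by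
      funext w
      by_contra h
      have : w ∈ Finset.univ.filter fun w => a w ≠ b w := by simp [h]
      have := Finset.card_pos.2 ⟨w, this⟩
      omega
    rw [this]
  | succ d ih =>
    intro a b hc hne
    have hab : a ≠ b := fun h => hne (by rw [h])
    obtain ⟨u, hu⟩ : ∃ u, a u ≠ b u := by
      by_contra h; push_neg at h; exact hab (funext h)
    set c := Function.update a u (b u) with hcdef
    by_cases hfc : f a v = f c v
    · have hne' : f c v ≠ f b v := by rw [← hfc]; exact hne
      have hsub : (Finset.univ.filter fun w => c w ≠ b w) ⊆
          (Finset.univ.filter fun w => a w ≠ b w).erase u := by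
        intro w hw
        simp only [Finset.mem_filter, Finset.mem_univ, true_and] at hw
        have hwu : w ≠ u := by
          intro h; subst h; apply hw; simp [hcdef]
        simp only [Finset.mem_erase, Finset.mem_filter, Finset.mem_univ, true_and]
        refine ⟨hwu, ?_⟩
        rwa [hcdef, Function.update_of_ne hwu] at hw
      have hcard : (Finset.univ.filter fun w => c w ≠ b w).card ≤ d := by
        have h1 := Finset.card_le_card hsub
        have h2 : u ∈ Finset.univ.filter fun w => a w ≠ b w := by simp [hu]
        have h3 := Finset.card_erase_of_mem h2
        have h4 := Finset.card_pos.2 ⟨u, h2⟩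
        omega
      obtain ⟨u', hu', hdep⟩ := ih c b hcard hne'
      have hu'u : u' ≠ u := by
        intro h; subst h; apply hu'; simp [hcdef]  -- c u = b u, so hu' says b u ≠ b u? no
      refine ⟨u', ?_, hdep⟩
      rwa [hcdef, Function.update_of_ne hu'u] at hu'
    · refine ⟨u, hu, a, c, ?_, hfc⟩
      intro w hw
      rw [hcdef, Function.update_of_ne hw]

end Aux

lemma fixed_le {n : ℕ} (f : (Fin n → Bool) → Fin n → Bool)
    (G : Fin n → Fin n → Prop) (hG : ∀ u v, G u v ↔ Depends f u v)
    (I : Finset (Fin n)) (hI : IsFVS G I)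
    (hmono : ∀ v : Fin n, v ∉ I → Monotone fun x : Fin n → Bool => f x v)
    (x y : Fin n → Bool) (hx : f x = x) (hy : f y = y)
    (hIle : ∀ v ∈ I, x v ≤ y v) : x ≤ y := by
  by_contra hxy
  obtain ⟨v₀, hv₀⟩ : ∃ v, ¬ (x v ≤ y v) := by
    by_contra h; push_neg at h; exact hxy h
  set D : Fin n → Prop := fun v => ¬ (x v ≤ y v) with hDdef
  have hDI : ∀ v, D v → v ∉ I := fun v hv hvI => hv (hIle v hvI)
  have hDval : ∀ v, D v → x v = true ∧ y v = false := by
    intro v hv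
    rw [hDdef] at hv
    cases hxv : x v <;> cases hyv : y v <;> simp_all
  have hstep : ∀ v, D v → ∃ u, D u ∧ G u v := by
    intro v hv
    have hmv := hmono v (hDI v hv)
    have hmy : (fun w => x w && y w) ≤ y := by
      intro w
      cases hyw : y w <;> simp [hyw]
    have h1 : f (fun w => x w && y w) v = false := by
      have h : f (fun w => x w && y w) v ≤ f y v := hmv hmy
      have hfy : f y v = y v := congrFun hy v
      rw [hfy, (hDval v hv).2] at h
      cases hfm : f (fun w => x w && y w) v
      · rfl
      · rw [hfm] at h; exact absurd h (by simp)
    have h2 : f x v = true := by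
      rw [congrFun hx v]; exact (hDval v hv).1
    have hne : f (fun w => x w && y w) v ≠ f x v := by
      rw [h1, h2]; simp
    obtain ⟨u, hu, hdep⟩ := exists_depends f v _ (fun w => x w && y w) x le_rfl hne
    refine ⟨u, ?_, (hG u v).2 hdep⟩
    rw [hDdef]
    intro hle
    apply hu
    cases hxu : x u
    · simp [hxu]
    · have hyu : y u = true := by
        rw [hxu] at hle
        exact le_antisymm (by simp) hle
      simp [hxu, hyu]
  obtain ⟨l, hcyc, hmem⟩ := exists_cycle v₀ hv₀ hstep
  obtain ⟨v, hvl, hvI⟩ := hI l hcyc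
  exact hDI v (hmem v hvl) hvI

/-- if `f_v` is monotone for every `v ∉ I`, where `I` is a feedback
vertex set of the interaction graph of `f`, then for fixed points `x ≤ y ↔ x_I ≤ y_I`;
consequently the set of fixed points is order-isomorphic to its set of
restrictions to `I`. -/
theorem stmt1 {n : ℕ} (f : (Fin n → Bool) → Fin n → Bool)
    (G : Fin n → Fin n → Prop) (hG : ∀ u v, G u v ↔ Depends f u v)
    (I : Finset (Fin n)) (hI : IsFVS G I)
    (hmono : ∀ v : Fin n, v ∉ I → Monotone fun x : Fin n → Bool => f x v) :
    (∀ x y : Fin n → Bool, f x = x → f y = y →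
        (x ≤ y ↔ ∀ v ∈ I, x v ≤ y v)) ∧
    Nonempty ({x : Fin n → Bool // f x = x} ≃o
      {z : {v // v ∈ I} → Bool | ∃ x : Fin n → Bool, f x = x ∧ z = fun v => x v.1}) := by
  have key : ∀ x y : Fin n → Bool, f x = x → f y = y →
      (x ≤ y ↔ ∀ v ∈ I, x v ≤ y v) := by
    intro x y hx hy
    exact ⟨fun h v _ => h v, fixed_le f G hG I hI hmono x y hx hy⟩
  have hinj : ∀ x y : Fin n → Bool, f x = x → f y = y →
      (∀ v ∈ I, x v = y v) → x = y := by
    intro x y hx hy h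
    have h1 : x ≤ y := (key x y hx hy).2 fun v hv => le_of_eq (h v hv)
    have h2 : y ≤ x := (key y x hy hx).2 fun v hv => le_of_eq (h v hv).symm
    exact le_antisymm h1 h2
  refine ⟨key, ⟨?_⟩⟩
  refine
    { toFun := fun x => ⟨fun v => x.1 v.1, ⟨x.1, x.2, rfl⟩⟩
      invFun := fun z => ⟨Classical.choose z.2, (Classical.choose_spec z.2).1⟩
      left_inv := ?_
      right_inv := ?_
      map_rel_iff' := ?_ }
  · intro x
    apply Subtype.ext
    set z : {z : {v // v ∈ I} → Bool | ∃ x' : Fin n → Bool, f x' = x' ∧ z = fun v => x' v.1} :=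
      ⟨fun v => x.1 v.1, ⟨x.1, x.2, rfl⟩⟩ with hz
    obtain ⟨hc1, hc2⟩ := Classical.choose_spec z.2
    apply hinj _ _ hc1 x.2
    intro v hv
    have := congrFun hc2 ⟨v, hv⟩
    exact this.symm
  · intro z
    apply Subtype.ext
    obtain ⟨hc1, hc2⟩ := Classical.choose_spec z.2
    exact hc2.symm
  · intro a b
    simp only [Equiv.coe_fn_mk, Subtype.mk_le_mk, Pi.le_def, Subtype.forall]
    constructor
    · intro h
      show a.1 ≤ b.1
      exact (key a.1 b.1 a.2 b.2).2 h
    · intro h v hv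
      have h' : a.1 ≤ b.1 := h
      exact (key a.1 b.1 a.2 b.2).1 h' v hv
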